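/- Let p be an odd prime, let K = ℚ_p(μ_p) be the field obtained by adjoining the p-th roots of unity, with ring of integers O and maximal ideal 𝔪, and let π ∈ K satisfy π^(p-1) = -p. Then every p-th root of unity ζ ∈ K satisfies (ζ - 1)/π ∈ O, and the map ζ ↦ ((ζ - 1)/π mod 𝔪) is a bijection from the group μ_p of p-th roots of unity in K onto the prime field 𝔽_p ⊆ O/𝔪. -/

import Mathlib

open Finset Polynomial

section Helpers

variable {K : Type*} [Field K]

lemma v_nat_le_one (v : Valuation K NNReal) (n : ℕ) : v (n : K) ≤ 1 := by
  induction n with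
  | zero => simp
  | succ n ih =>
    push_cast
    exact le_trans (v.map_add _ _) (max_le ih (le_of_eq v.map_one))

lemma v_int_le_one (v : Valuation K NNReal) (n : ℤ) : v (n : K) ≤ 1 := by
  obtain ⟨m, rfl | rfl⟩ := Int.eq_nat_or_neg n
  · exact_mod_cast v_nat_le_one v m
  · push_cast
    rw [Valuation.map_neg]
    exact_mod_cast v_nat_le_one v m

lemma v_root_one (v : Valuation K NNReal) {p : ℕ} (hp : p ≠ 0) {ζ : K}
    (hζ : ζ ^ p = 1) : v ζ = 1 := by
  have h1 : (v ζ) ^ p = 1 := by rw [← map_pow, hζ, map_one]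
  rcases lt_trichotomy (v ζ) 1 with h | h | h
  · exact absurd h1 (ne_of_lt (pow_lt_one₀ (zero_le) h hp))
  · exact h
  · exact absurd h1 (ne_of_gt (one_lt_pow₀ h hp))

/-- If `v t ≤ 1` and `t^p ≡ t mod 𝔪`, then `t` is congruent to some `c < p` mod `𝔪`. -/
lemma exists_c (v : Valuation K NNReal) (p : ℕ) (hp : p.Prime)
    (hvp : v (p : K) < 1) (t : K) (ht : v t ≤ 1) (h2 : v (t ^ p - t) < 1) :
    ∃ c : ℕ, c < p ∧ v (t - (c : K)) < 1 := by
  haveI : Fact p.Prime := ⟨hp⟩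
  have hmon : (X ^ p - X : (ZMod p)[X]).Monic :=
    (monic_X_pow p).sub_of_left (by rw [degree_X, degree_X_pow]; exact_mod_cast hp.one_lt)
  have hcard : Fintype.card (ZMod p) = p := ZMod.card p
  have hroots : (X ^ p - X : (ZMod p)[X]).roots = (univ : Finset (ZMod p)).val := by
    have := FiniteField.roots_X_pow_card_sub_X (ZMod p)
    rwa [hcard] at this
  have hZ : (∏ a : ZMod p, (X - C a)) = (X ^ p - X : (ZMod p)[X]) := by
    have h := prod_multiset_X_sub_C_of_monic_of_roots_card_eq hmon ?_
    · rw [hroots] at h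
      rw [← h, Finset.prod_eq_multiset_prod]
    · rw [hroots, FiniteField.X_pow_card_sub_X_natDegree_eq (ZMod p) hp.one_lt]
      simpa using hcard
  have hZ' : (∏ c ∈ range p, (X - C ((c : ℕ) : ZMod p))) = (X ^ p - X : (ZMod p)[X]) := by
    rw [← hZ]
    refine Finset.prod_bij' (fun c _ => ((c : ℕ) : ZMod p)) (fun a _ => a.val)
      (fun c _ => mem_univ _) (fun a _ => mem_range.mpr (ZMod.val_lt a)) ?_ ?_ ?_
    · intro c hc
      exact ZMod.val_cast_of_lt (mem_range.mp hc)
    · intro a _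
      exact ZMod.natCast_rightInverse a
    · intro c _
      rfl
  set Q : ℤ[X] := (∏ c ∈ range p, (X - C (c : ℤ))) - (X ^ p - X) with hQdef
  have hQmap : Q.map (Int.castRingHom (ZMod p)) = 0 := by
    rw [hQdef, Polynomial.map_sub, Polynomial.map_prod, Polynomial.map_sub,
      Polynomial.map_pow, Polynomial.map_X, sub_eq_zero]
    rw [← hZ']
    refine Finset.prod_congr rfl fun c _ => ?_
    rw [Polynomial.map_sub, Polynomial.map_X, Polynomial.map_C]
    norm_num
  have hdvd : ∀ i, (p : ℤ) ∣ Q.coeff i := by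
    intro i
    have h : ((Q.coeff i : ℤ) : ZMod p) = 0 := by
      have := congrArg (fun f => Polynomial.coeff f i) hQmap
      simpa [Polynomial.coeff_map] using this
    exact (ZMod.intCast_zmod_eq_zero_iff_dvd _ p).mp h
  have hev : Polynomial.aeval t Q = (∏ c ∈ range p, (t - (c : K))) - (t ^ p - t) := by
    rw [hQdef, map_sub, map_sub, map_pow, Polynomial.aeval_X, map_prod]
    congr 1
    refine Finset.prod_congr rfl fun c _ => ?_
    rw [map_sub, Polynomial.aeval_X, Polynomial.aeval_C]
    norm_num
  have hvQ : v (Polynomial.aeval t Q) < 1 := by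
    rw [Polynomial.aeval_eq_sum_range]
    refine Valuation.map_sum_lt v one_ne_zero fun i _ => ?_
    obtain ⟨m, hm⟩ := hdvd i
    rw [hm, zsmul_eq_mul, Int.cast_mul, Int.cast_natCast, mul_assoc]
    rw [map_mul]
    calc v (p : K) * v ((m : K) * t ^ i)
        ≤ v (p : K) * 1 := by
          refine mul_le_mul_right ?_ _
          rw [map_mul, map_pow]
          exact mul_le_one' (v_int_le_one v m) (pow_le_one₀ (zero_le) ht)
      _ = v (p : K) := mul_one _
      _ < 1 := hvp
  have hprod : v (∏ c ∈ range p, (t - (c : K))) < 1 := by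
    have h : (∏ c ∈ range p, (t - (c : K))) = Polynomial.aeval t Q + (t ^ p - t) := by
      rw [hev]; ring
    rw [h]
    exact lt_of_le_of_lt (v.map_add _ _) (max_lt hvQ h2)
  by_contra hcon
  push_neg at hcon
  have h1 : (1 : NNReal) ≤ v (∏ c ∈ range p, (t - (c : K))) := by
    rw [map_prod]
    exact Finset.one_le_prod' fun c hc => hcon c (mem_range.mp hc)
  exact absurd hprod (not_lt.mpr h1)

/-- Main local computation: for a nontrivial `p`-th root of unity `ζ`,
`v (ζ - 1) = v π` and `t = (ζ-1)/π` satisfies `t^p ≡ t mod 𝔪`. -/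
lemma key (p : ℕ) (hp : p.Prime) [CharZero K] (v : Valuation K NNReal)
    (hvp : v (p : K) = (p : NNReal)⁻¹) (π : K) (hπ : π ^ (p - 1) = -(p : K))
    (ζ : K) (hζ : ζ ^ p = 1) (hne : ζ ≠ 1) :
    v (ζ - 1) = v π ∧ v (((ζ - 1) / π) ^ p - (ζ - 1) / π) < 1 := by
  obtain ⟨q, rfl⟩ : ∃ q, p = q + 2 := ⟨p - 2, by have := hp.two_le; omega⟩
  have hπ' : π ^ (q + 1) = -(((q + 2 : ℕ) : K)) := hπ
  have hpK : ((q + 2 : ℕ) : K) ≠ 0 := Nat.cast_ne_zero.mpr (by omega)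
  have hpn0 : ((q + 2 : ℕ) : NNReal) ≠ 0 := Nat.cast_ne_zero.mpr (by omega)
  have hvpn : (((q + 2 : ℕ) : NNReal))⁻¹ ≠ 0 := inv_ne_zero hpn0
  have hpos : 0 < (((q + 2 : ℕ) : NNReal))⁻¹ := pos_iff_ne_zero.mpr hvpn
  have hvplt : (((q + 2 : ℕ) : NNReal))⁻¹ < 1 := by
    rw [inv_lt_one₀ (pos_iff_ne_zero.mpr hpn0)]
    exact_mod_cast hp.one_lt
  have hvπpow : (v π) ^ (q + 1) = (((q + 2 : ℕ) : NNReal))⁻¹ := by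
    rw [← map_pow, hπ', Valuation.map_neg, hvp]
  have hvπ0 : v π ≠ 0 := by
    intro h
    rw [h, zero_pow (by omega : q + 1 ≠ 0)] at hvπpow
    exact hvpn hvπpow.symm
  have hπpos : 0 < v π := pos_iff_ne_zero.mpr hvπ0
  have hπ0 : π ≠ 0 := fun h => hvπ0 (by rw [h, map_zero])
  have hvπ1 : v π < 1 := by
    by_contra h
    push_neg at h
    have h1 : (1 : NNReal) ≤ (v π) ^ (q + 1) := one_le_pow₀ h
    rw [hvπpow] at h1
    exact absurd h1 (not_le.mpr hvplt)
  have hvζ : v ζ = 1 := v_root_one v (by omega) hζ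
  set x := ζ - 1 with hxdef
  have hx0 : x ≠ 0 := sub_ne_zero.mpr hne
  have ha1 : v x ≤ 1 := by
    refine le_trans (v.map_sub _ _) (max_le (le_of_eq hvζ) (le_of_eq v.map_one))
  -- binomial expansion of (x+1)^p = 1
  have hbin0 : ∑ m ∈ range (q + 2 + 1), x ^ m * (((q + 2).choose m : ℕ) : K) = 1 := by
    have h : (x + 1) ^ (q + 2) = 1 := by rw [hxdef, sub_add_cancel]; exact hζ
    rw [add_pow] at h
    simpa using h
  have hbin1 : ∑ m ∈ range (q + 2), x ^ (m + 1) * (((q + 2).choose (m + 1) : ℕ) : K) = 0 := by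
    have h := hbin0
    rw [Finset.sum_range_succ'] at h
    simpa using h
  have hbin2 : ∑ m ∈ range (q + 2), x ^ m * (((q + 2).choose (m + 1) : ℕ) : K) = 0 := by
    have h2 : x * ∑ m ∈ range (q + 2), x ^ m * (((q + 2).choose (m + 1) : ℕ) : K) = 0 := by
      rw [Finset.mul_sum, ← hbin1]
      exact Finset.sum_congr rfl fun m _ => by ring
    exact (mul_eq_zero.mp h2).resolve_left hx0
  set S : K := ∑ m ∈ range q, x ^ (m + 1) * (((q + 2).choose (m + 2) : ℕ) : K) with hSdef
  have hbin3 : x ^ (q + 1) = -(((q + 2 : ℕ) : K)) - S := by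
    have h := hbin2
    rw [Finset.sum_range_succ, Finset.sum_range_succ'] at h
    simp only [zero_add, Nat.choose_self, Nat.cast_one, mul_one, pow_zero, one_mul,
      Nat.choose_one_right] at h
    rw [hSdef]
    linear_combination h
  have hvS : v S ≤ v x * (((q + 2 : ℕ) : NNReal))⁻¹ := by
    refine Valuation.map_sum_le v fun m hm => ?_
    obtain ⟨n, hn⟩ := hp.dvd_choose_self (k := m + 2) (by omega)
      (by have := mem_range.mp hm; omega)
    rw [hn, Nat.cast_mul, map_mul, map_mul, map_pow]
    have hterm1 : (v x) ^ (m + 1) ≤ v x := pow_le_of_le_one (zero_le) ha1 (by omega)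
    have hterm2 : v ((n : ℕ) : K) ≤ 1 := v_nat_le_one v n
    calc (v x) ^ (m + 1) * (v ((q + 2 : ℕ) : K) * v ((n : ℕ) : K))
        ≤ v x * (v ((q + 2 : ℕ) : K) * 1) :=
          mul_le_mul hterm1 (mul_le_mul_right hterm2 _) (zero_le) (zero_le)
      _ = v x * (((q + 2 : ℕ) : NNReal))⁻¹ := by rw [mul_one, hvp]
  have hA_le : (v x) ^ (q + 1) ≤ (((q + 2 : ℕ) : NNReal))⁻¹ := by
    rw [← map_pow, hbin3]
    refine le_trans (v.map_sub _ _) (max_le ?_ ?_)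
    · rw [Valuation.map_neg, hvp]
    · exact le_trans hvS (by
        calc v x * (((q + 2 : ℕ) : NNReal))⁻¹ ≤ 1 * (((q + 2 : ℕ) : NNReal))⁻¹ :=
          mul_le_mul_left ha1 _
        _ = _ := one_mul _)
  have hA_ge : (((q + 2 : ℕ) : NNReal))⁻¹ ≤ (v x) ^ (q + 1) := by
    by_contra hcon
    push_neg at hcon
    have hxlt : v x < 1 := by
      rcases lt_or_eq_of_le ha1 with h | h
      · exact h
      · rw [h, one_pow] at hcon
        exact absurd hcon (not_lt.mpr (le_of_lt hvplt))
    have hp_eq : ((q + 2 : ℕ) : K) = -(x ^ (q + 1)) - S := by rw [hbin3]; ring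
    have hmax : (((q + 2 : ℕ) : NNReal))⁻¹ ≤ max ((v x) ^ (q + 1)) (v S) := by
      rw [← hvp]
      conv_lhs => rw [hp_eq]
      refine le_trans (v.map_sub _ _) (le_of_eq ?_)
      rw [Valuation.map_neg, map_pow]
    have hS' : v S < (((q + 2 : ℕ) : NNReal))⁻¹ :=
      lt_of_le_of_lt hvS (by
        calc v x * (((q + 2 : ℕ) : NNReal))⁻¹ < 1 * (((q + 2 : ℕ) : NNReal))⁻¹ :=
          mul_lt_mul_of_pos_right hxlt hpos
        _ = _ := one_mul _)
    exact absurd hmax (not_le.mpr (max_lt hcon hS'))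
  have hApow : (v x) ^ (q + 1) = (v π) ^ (q + 1) := by
    rw [le_antisymm hA_le hA_ge, hvπpow]
  have hvx : v x = v π := by
    rcases lt_trichotomy (v x) (v π) with h | h | h
    · exact absurd hApow (ne_of_lt (pow_lt_pow_left₀ h (zero_le) (by omega)))
    · exact h
    · exact absurd hApow (ne_of_gt (pow_lt_pow_left₀ h (zero_le) (by omega)))
  refine ⟨hvx, ?_⟩
  have hxp2 : x ^ (q + 2) = (-(((q + 2 : ℕ) : K)) - S) * x := by rw [pow_succ, hbin3]
  have hπp2 : π ^ (q + 2) = -(((q + 2 : ℕ) : K)) * π := by rw [pow_succ, hπ']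
  have hteq : (x / π) ^ (q + 2) - x / π = x * S / (((q + 2 : ℕ) : K) * π) := by
    have hP : ((q + 2 : ℕ) : K) ≠ 0 := hpK
    rw [div_pow, hxp2, hπp2]
    generalize ((q + 2 : ℕ) : K) = P at hP ⊢
    field_simp
    ring
  rw [hteq, map_div₀, map_mul, map_mul, hvp]
  rw [div_lt_one (by positivity)]
  calc v x * v S ≤ v π * (v π * (((q + 2 : ℕ) : NNReal))⁻¹) := by
        rw [hvx] at hvS ⊢
        exact mul_le_mul_right hvS _
    _ = (v π * v π) * (((q + 2 : ℕ) : NNReal))⁻¹ := by ring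
    _ < (1 * v π) * (((q + 2 : ℕ) : NNReal))⁻¹ :=
        mul_lt_mul_of_pos_right (mul_lt_mul_of_pos_right hvπ1 hπpos) hpos
    _ = (((q + 2 : ℕ) : NNReal))⁻¹ * v π := by ring

end Helpers

theorem dwork_residue_bijection (p : ℕ) (hp : p.Prime) (hodd : Odd p)
    (K : Type*) [Field K] [CharZero K] (v : Valuation K NNReal)
    (hvp : v (p : K) = (p : NNReal)⁻¹)
    (hroots : ∃ ζ : K, ζ ^ p = 1 ∧ ζ ≠ 1)
    (π : K) (hπ : π ^ (p - 1) = -(p : K)) :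
    (∀ ζ : K, ζ ^ p = 1 → v ((ζ - 1) / π) ≤ 1) ∧
      (∀ ζ : K, ζ ^ p = 1 → ∃ c : ℕ, c < p ∧ v ((ζ - 1) / π - (c : K)) < 1) ∧
      (∀ ζ ζ' : K, ζ ^ p = 1 → ζ' ^ p = 1 →
        v ((ζ - 1) / π - (ζ' - 1) / π) < 1 → ζ = ζ') ∧
      (∀ c : ℕ, c < p → ∃ ζ : K, ζ ^ p = 1 ∧ v ((ζ - 1) / π - (c : K)) < 1) := by
  haveI : Fact p.Prime := ⟨hp⟩
  have hp0 : p ≠ 0 := hp.ne_zero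
  have hpn0 : ((p : ℕ) : NNReal) ≠ 0 := Nat.cast_ne_zero.mpr hp0
  have hvpn : ((p : NNReal))⁻¹ ≠ 0 := inv_ne_zero hpn0
  have hvplt : ((p : NNReal))⁻¹ < 1 := by
    rw [inv_lt_one₀ (pos_iff_ne_zero.mpr hpn0)]
    exact_mod_cast hp.one_lt
  have hvπpow : (v π) ^ (p - 1) = ((p : NNReal))⁻¹ := by
    rw [← map_pow, hπ, Valuation.map_neg, hvp]
  have hvπ0 : v π ≠ 0 := by
    intro h
    rw [h, zero_pow (by have := hp.two_le; omega : p - 1 ≠ 0)] at hvπpow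
    exact hvpn hvπpow.symm
  -- Part 1
  have part1 : ∀ ζ : K, ζ ^ p = 1 → v ((ζ - 1) / π) ≤ 1 := by
    intro ζ hζ
    by_cases h1 : ζ = 1
    · simp [h1]
    · have := (key p hp v hvp π hπ ζ hζ h1).1
      rw [map_div₀, this, div_self hvπ0]
  -- Part 2
  have part2 : ∀ ζ : K, ζ ^ p = 1 → ∃ c : ℕ, c < p ∧ v ((ζ - 1) / π - (c : K)) < 1 := by
    intro ζ hζ
    refine exists_c v p hp (by rw [hvp]; exact hvplt) _ (part1 ζ hζ) ?_
    by_cases h1 : ζ = 1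
    · simp [h1, zero_pow hp0]
    · exact (key p hp v hvp π hπ ζ hζ h1).2
  -- Part 3
  have part3 : ∀ ζ ζ' : K, ζ ^ p = 1 → ζ' ^ p = 1 →
      v ((ζ - 1) / π - (ζ' - 1) / π) < 1 → ζ = ζ' := by
    intro ζ ζ' hζ hζ' hlt
    by_contra hne
    have hζ'0 : ζ' ≠ 0 := fun h => by
      rw [h, zero_pow hp0] at hζ'; exact zero_ne_one hζ'
    set ξ := ζ * ζ'⁻¹ with hξdef
    have hξp : ξ ^ p = 1 := by
      rw [hξdef, mul_pow, hζ, inv_pow, hζ', inv_one, one_mul]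
    have hξ1 : ξ ≠ 1 := by
      intro h
      apply hne
      rw [hξdef] at h
      exact (mul_inv_eq_one₀ hζ'0).mp h
    have hkey := (key p hp v hvp π hπ ξ hξp hξ1).1
    have hvζ' : v ζ' = 1 := v_root_one v hp0 hζ'
    have heq : (ζ - 1) / π - (ζ' - 1) / π = ζ' * (ξ - 1) / π := by
      rw [hξdef]
      field_simp
      ring
    rw [heq, map_div₀, map_mul, hvζ', one_mul, hkey, div_self hvπ0] at hlt
    exact absurd hlt (lt_irrefl 1)
  refine ⟨part1, part2, part3, ?_⟩
  -- Part 4 : pigeonhole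
  obtain ⟨ζ₀, hζ₀, hζ₀ne⟩ := hroots
  have hζ₀0 : ζ₀ ≠ 0 := fun h => by
    rw [h, zero_pow hp0] at hζ₀; exact zero_ne_one hζ₀
  have hord : orderOf ζ₀ = p := orderOf_eq_prime hζ₀ hζ₀ne
  have hpowroot : ∀ k : ℕ, (ζ₀ ^ k) ^ p = 1 := fun k => by
    rw [← pow_mul, mul_comm, pow_mul, hζ₀, one_pow]
  have hpowinj : ∀ k j : ℕ, k < p → j < p → ζ₀ ^ k = ζ₀ ^ j → k = j := by
    have main : ∀ k j : ℕ, k ≤ j → j < p → ζ₀ ^ k = ζ₀ ^ j → k = j := by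
      intro k j hkj hjp heq
      have h1 : ζ₀ ^ k * ζ₀ ^ (j - k) = ζ₀ ^ k * 1 := by
        rw [mul_one, ← pow_add]
        rw [show k + (j - k) = j by omega]
        exact heq.symm
      have h2 : ζ₀ ^ (j - k) = 1 := mul_left_cancel₀ (pow_ne_zero _ hζ₀0) h1
      have h3 : p ∣ j - k := hord ▸ orderOf_dvd_of_pow_eq_one h2
      rcases Nat.eq_zero_or_pos (j - k) with h4 | h4
      · omega
      · exact absurd (Nat.le_of_dvd h4 h3) (by omega)
    intro k j hk hj heq
    rcases le_total k j with h | h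
    · exact main k j h hj heq
    · exact (main j k h hk heq.symm).symm
  choose f hf1 hf2 using fun k : Fin p => part2 (ζ₀ ^ (k : ℕ)) (hpowroot k)
  set g : Fin p → Fin p := fun k => ⟨f k, hf1 k⟩ with hgdef
  have hginj : Function.Injective g := by
    intro k j hkj
    have hfkj : f k = f j := congrArg Fin.val hkj
    have hlt : v ((ζ₀ ^ (k : ℕ) - 1) / π - (ζ₀ ^ (j : ℕ) - 1) / π) < 1 := by
      have h : (ζ₀ ^ (k : ℕ) - 1) / π - (ζ₀ ^ (j : ℕ) - 1) / π =
          ((ζ₀ ^ (k : ℕ) - 1) / π - (f k : K)) - ((ζ₀ ^ (j : ℕ) - 1) / π - (f j : K)) := by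
        rw [hfkj]; ring
      rw [h]
      exact lt_of_le_of_lt (v.map_sub _ _) (max_lt (hf2 k) (hf2 j))
    have := part3 _ _ (hpowroot k) (hpowroot j) hlt
    exact Fin.ext (hpowinj _ _ k.isLt j.isLt this)
  have hgsurj : Function.Surjective g := Finite.surjective_of_injective hginj
  intro c hc
  obtain ⟨k, hk⟩ := hgsurj ⟨c, hc⟩
  refine ⟨ζ₀ ^ (k : ℕ), hpowroot k, ?_⟩
  have : f k = c := congrArg Fin.val hk
  rw [← this]
  exact hf2 k
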